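/- Within the privacy analysis of SearchCom: let f be a statistic of proximity with impact cardinality IC(f), let T̃ ⊆ T, fix arbitrary real noise values ζ_v for each unexamined vertex v and set f̂(v) = f(G,v,T̃) + ζ_v, fix a targeted vertex t and a threshold f̂(t), and let b(G) denote the number of protected vertices v ∈ P with f̂(v) ≥ f̂(t). Then for every pair of graphs G, G' neighboring with respect to (P,T), |b(G) − b(G')| ≤ IC(f); consequently releasing b̂ = b(G) − ν with ν ∼ Lap(2·IC(f)/ε) is (ε/2)-differentially private with respect to rewiring the edges of a single protected vertex. -/

import Mathlib

open MeasureTheory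

/-- Two simple graphs on `V` are *neighboring* with respect to a protected set `P`
if one can be obtained from the other by arbitrarily rewiring the edges incident
to a single protected vertex `v ∈ P`. -/
def Neighboring {V : Type*} (P : Set V) (G G' : SimpleGraph V) : Prop :=
  ∃ v ∈ P, ∀ a b : V, a ≠ v → b ≠ v → (G.Adj a b ↔ G'.Adj a b)

/-- The impact cardinality of a statistic of proximity `f`: the maximum, over
neighboring graphs `G ∼ G'` and `S ⊆ T`, of the number of vertices `v` with
`f(G,v,S) ≠ f(G',v,S)`. -/
noncomputable def impactCardinality {V : Type*} (P T : Set V)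
    (f : SimpleGraph V → V → Set V → ℝ) : ℕ :=
  sSup {m : ℕ | ∃ G G' : SimpleGraph V, ∃ S : Set V, Neighboring P G G' ∧ S ⊆ T ∧
    m = Set.ncard {v : V | f G v S ≠ f G' v S}}

/-- The Laplace distribution `Lap(b)` centered at `0`, with density
`(1/(2b))·exp(−|x|/b)` with respect to Lebesgue measure. -/
noncomputable def laplace (b : ℝ) : Measure ℝ :=
  volume.withDensity fun x => ENNReal.ofReal ((1 / (2 * b)) * Real.exp (-|x| / b))

/-- Given fixed noise values `ζ` and a fixed threshold `θ` (the noisy value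
`f̂(t)` of the fixed targeted vertex `t`), `bCount G` is the number of protected
vertices `v ∈ P` whose perturbed score `f̂(v) = f(G,v,T̃) + ζ v` is at least `θ`. -/
noncomputable def bCount {V : Type*} (P : Set V) (f : SimpleGraph V → V → Set V → ℝ)
    (Ttil : Set V) (ζ : V → ℝ) (θ : ℝ) (G : SimpleGraph V) : ℕ :=
  Set.ncard {v : V | v ∈ P ∧ θ ≤ f G v Ttil + ζ v}


lemma laplace_map_sub (b c : ℝ) :
    (laplace b).map (fun ν => c - ν) =
      volume.withDensity fun y => ENNReal.ofReal ((1 / (2 * b)) * Real.exp (-|c - y| / b)) := by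
  have hm : Measurable fun ν : ℝ => c - ν := measurable_const.sub measurable_id
  ext S hS
  rw [Measure.map_apply hm hS, laplace, withDensity_apply _ (hm hS), withDensity_apply _ hS,
    ← lintegral_indicator (hm hS), ← lintegral_indicator hS]
  have hmp : MeasurePreserving (fun x : ℝ => c - x) volume volume :=
    Measure.measurePreserving_sub_left volume c
  have hH : Measurable fun y : ℝ => ENNReal.ofReal ((1 / (2 * b)) * Real.exp (-|c - y| / b)) := by
    fun_prop
  rw [← hmp.lintegral_comp (hH.indicator hS)]
  congr 1; ext x
  by_cases hx : c - x ∈ S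
  · rw [Set.indicator_of_mem (show x ∈ (fun ν => c - ν) ⁻¹' S from hx),
      Set.indicator_of_mem hx, sub_sub_cancel]
  · rw [Set.indicator_of_notMem (show x ∉ (fun ν => c - ν) ⁻¹' S from hx),
      Set.indicator_of_notMem hx]

/-- Within the privacy analysis of `SearchCom`: for fixed noise values `ζ`, a
fixed targeted vertex `t ∈ T` and threshold `θ = f̂(t)`, and `T̃ ⊆ T`, for every
pair of graphs `G, G'` neighboring with respect to the partition `(P, T)` we
have `|b(G) − b(G')| ≤ IC(f)`; consequently, releasing `b̂ = b(G) − ν` with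
`ν ∼ Lap(2·IC(f)/ε)` is `(ε/2)`-differentially private with respect to rewiring
the edges of a single protected vertex. -/
theorem bCount_release_private {V : Type*} [Fintype V]
    (P T : Set V) (hUnion : P ∪ T = Set.univ) (hDisj : Disjoint P T)
    (f : SimpleGraph V → V → Set V → ℝ)
    (Ttil : Set V) (hTtil : Ttil ⊆ T)
    (ζ : V → ℝ) (t : V) (ht : t ∈ T) (θ : ℝ)
    (ε : ℝ) (hε : 0 < ε)
    (G G' : SimpleGraph V) (hN : Neighboring P G G') :
    |(bCount P f Ttil ζ θ G : ℤ) - (bCount P f Ttil ζ θ G' : ℤ)| ≤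
        (impactCardinality P T f : ℤ) ∧
      ∀ S : Set ℝ, MeasurableSet S →
        (laplace (2 * (impactCardinality P T f : ℝ) / ε)).map
            (fun ν => (bCount P f Ttil ζ θ G : ℝ) - ν) S ≤
          ENNReal.ofReal (Real.exp (ε / 2)) *
            (laplace (2 * (impactCardinality P T f : ℝ) / ε)).map
              (fun ν => (bCount P f Ttil ζ θ G' : ℝ) - ν) S  := by
  classical
  set k := impactCardinality P T f with hk
  set D := {v : V | f G v Ttil ≠ f G' v Ttil} with hD
  have hDk : D.ncard ≤ k := by
    apply le_csSup
    · refine ⟨(Set.univ : Set V).ncard, ?_⟩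
      rintro m ⟨G1, G2, S, -, -, rfl⟩
      exact Set.ncard_le_ncard (Set.subset_univ _) Set.finite_univ
    · exact ⟨G, G', Ttil, hN, hTtil, rfl⟩
  set a := bCount P f Ttil ζ θ G with ha
  set a' := bCount P f Ttil ζ θ G' with ha'
  have h1 : a ≤ a' + D.ncard := by
    refine le_trans (le_trans (Set.ncard_le_ncard ?_ (Set.toFinite _)) (Set.ncard_union_le _ _))
      le_rfl
    intro v hv
    by_cases h : f G v Ttil = f G' v Ttil
    · exact Or.inl ⟨hv.1, h ▸ hv.2⟩
    · exact Or.inr h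
  have h2 : a' ≤ a + D.ncard := by
    refine le_trans (le_trans (Set.ncard_le_ncard ?_ (Set.toFinite _)) (Set.ncard_union_le _ _))
      le_rfl
    intro v hv
    by_cases h : f G v Ttil = f G' v Ttil
    · exact Or.inl ⟨hv.1, h ▸ hv.2⟩
    · exact Or.inr h
  have habs : |(a : ℤ) - (a' : ℤ)| ≤ (k : ℤ) := by
    rw [abs_sub_le_iff]
    omega
  refine ⟨habs, ?_⟩
  intro S hS
  rcases Nat.eq_zero_or_pos k with hk0 | hkpos
  · have haa : a = a' := by omega
    rw [haa]
    exact le_mul_of_one_le_left zero_le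
      (ENNReal.one_le_ofReal.mpr (Real.one_le_exp (by positivity)))
  · have hk0' : (0:ℝ) < (k : ℝ) := by exact_mod_cast hkpos
    set b := 2 * (k : ℝ) / ε with hb
    have hb0 : 0 < b := by positivity
    have hcc : |(a : ℝ) - (a' : ℝ)| ≤ (k : ℝ) := by
      exact_mod_cast habs
    rw [laplace_map_sub, laplace_map_sub, withDensity_apply _ hS, withDensity_apply _ hS,
      ← lintegral_const_mul' _ _ ENNReal.ofReal_ne_top]
    refine lintegral_mono fun y => ?_
    rw [← ENNReal.ofReal_mul (Real.exp_nonneg _)]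
    refine ENNReal.ofReal_le_ofReal ?_
    have hexp : Real.exp (-|(a : ℝ) - y| / b) ≤
        Real.exp (ε / 2) * Real.exp (-|(a' : ℝ) - y| / b) := by
      rw [← Real.exp_add]
      apply Real.exp_le_exp.mpr
      have h5 : |((a' : ℝ) - y) - ((a : ℝ) - y)| = |(a' : ℝ) - (a : ℝ)| := by ring_nf
      have key : |(a' : ℝ) - y| - |(a : ℝ) - y| ≤ (k : ℝ) := by
        have h4 := abs_sub_abs_le_abs_sub ((a' : ℝ) - y) ((a : ℝ) - y)
        rw [h5] at h4
        have hca : |(a' : ℝ) - (a : ℝ)| ≤ (k : ℝ) := by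
          rw [abs_sub_comm]; exact hcc
        linarith
      have hkb : (k : ℝ) / b = ε / 2 := by
        rw [hb]
        field_simp
      have h3 : (|(a' : ℝ) - y| - |(a : ℝ) - y|) / b ≤ (k : ℝ) / b := by gcongr
      have h6 : (|(a' : ℝ) - y| - |(a : ℝ) - y|) / b = |(a' : ℝ) - y| / b - |(a : ℝ) - y| / b :=
        sub_div _ _ _
      have h7 : -|(a : ℝ) - y| / b = -(|(a : ℝ) - y| / b) := neg_div _ _
      have h8 : -|(a' : ℝ) - y| / b = -(|(a' : ℝ) - y| / b) := neg_div _ _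
      linarith
    have hpos : (0:ℝ) ≤ 1 / (2 * b) := by positivity
    calc 1 / (2 * b) * Real.exp (-|(a : ℝ) - y| / b)
        ≤ 1 / (2 * b) * (Real.exp (ε / 2) * Real.exp (-|(a' : ℝ) - y| / b)) :=
          mul_le_mul_of_nonneg_left hexp hpos
      _ = Real.exp (ε / 2) * (1 / (2 * b) * Real.exp (-|(a' : ℝ) - y| / b)) := by ring
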